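/- For every integer n ≥ 1 and every ε > 0, there exists a continuous map f from the Euclidean space ℝⁿ to the unit sphere Sⁿ (the unit sphere centered at the origin in ℝ^{n+1}) such that f is surjective, f is Lipschitz with Lipschitz constant at most ε, and f is constant outside some compact subset of ℝⁿ. -/

import Mathlib

open Real

theorem hs_sin_lip (a b : ℝ) : |Real.sin a - Real.sin b| ≤ |a - b| := by
  rw [Real.sin_sub_sin, abs_mul, abs_mul, abs_two]
  calc 2 * |Real.sin ((a-b)/2)| * |Real.cos ((a+b)/2)|
      ≤ 2 * |(a-b)/2| * 1 := by
        gcongr 2 * ?_ * ?_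
        exacts [Real.abs_sin_le_abs, Real.abs_cos_le_one _]
    _ = |a - b| := by rw [abs_div, abs_two]; ring

theorem hs_cos_lip (a b : ℝ) : |Real.cos a - Real.cos b| ≤ |a - b| := by
  rw [Real.cos_sub_cos, abs_mul, abs_mul, abs_neg, abs_two]
  calc 2 * |Real.sin ((a+b)/2)| * |Real.sin ((a-b)/2)|
      ≤ 2 * 1 * |(a-b)/2| := by
        gcongr 2 * ?_ * ?_
        exacts [Real.abs_sin_le_one _, Real.abs_sin_le_abs]
    _ = |a - b| := by rw [abs_div, abs_two]; ring

theorem hs_min_lip (a b : ℝ) : |min a π - min b π| ≤ |a - b| := by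
  refine (abs_min_sub_min_le_max a π b π).trans (max_le le_rfl ?_)
  simp

theorem hs_unit_lip {E : Type*} [NormedAddCommGroup E] [NormedSpace ℝ E]
    {x y : E} (hx : x ≠ 0) (hy : y ≠ 0) :
    ‖‖x‖⁻¹ • x - ‖y‖⁻¹ • y‖ ≤ 2 / ‖y‖ * ‖x - y‖ := by
  have hx' : (0:ℝ) < ‖x‖ := norm_pos_iff.mpr hx
  have hy' : (0:ℝ) < ‖y‖ := norm_pos_iff.mpr hy
  have key : ‖x‖⁻¹ • x - ‖y‖⁻¹ • y = ‖y‖⁻¹ • (x - y) + (‖x‖⁻¹ - ‖y‖⁻¹) • x := by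
    rw [smul_sub, sub_smul]; abel
  rw [key]
  have habs : |‖x‖⁻¹ - ‖y‖⁻¹| ≤ ‖x - y‖ / (‖x‖ * ‖y‖) := by
    have h1 : ‖x‖⁻¹ - ‖y‖⁻¹ = (‖y‖ - ‖x‖) / (‖x‖ * ‖y‖) := by field_simp
    rw [h1, abs_div, abs_of_pos (mul_pos hx' hy')]
    gcongr
    exact (abs_norm_sub_norm_le y x).trans (norm_sub_rev y x).le
  calc ‖‖y‖⁻¹ • (x - y) + (‖x‖⁻¹ - ‖y‖⁻¹) • x‖
      ≤ ‖‖y‖⁻¹ • (x - y)‖ + ‖(‖x‖⁻¹ - ‖y‖⁻¹) • x‖ := norm_add_le _ _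
    _ = ‖y‖⁻¹ * ‖x - y‖ + |‖x‖⁻¹ - ‖y‖⁻¹| * ‖x‖ := by
        rw [norm_smul, norm_smul, Real.norm_eq_abs, Real.norm_eq_abs,
          abs_of_pos (inv_pos.mpr hy')]
    _ ≤ ‖y‖⁻¹ * ‖x - y‖ + (‖x - y‖ / (‖x‖ * ‖y‖)) * ‖x‖ := by gcongr
    _ = 2 / ‖y‖ * ‖x - y‖ := by field_simp; ring

noncomputable def hsV (n : ℕ) (x : EuclideanSpace ℝ (Fin n)) : EuclideanSpace ℝ (Fin n) :=
  Real.sin (min ‖x‖ π) • (‖x‖⁻¹ • x)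

theorem hs_sin_nonneg (t : ℝ) (ht : 0 ≤ t) : 0 ≤ Real.sin (min t π) :=
  Real.sin_nonneg_of_nonneg_of_le_pi (le_min ht Real.pi_nonneg) (min_le_right _ _)

theorem hs_sin_le (t : ℝ) (ht : 0 ≤ t) : Real.sin (min t π) ≤ t :=
  (Real.sin_le (le_min ht Real.pi_nonneg)).trans (min_le_left _ _)

theorem hsV_zero (n : ℕ) : hsV n 0 = 0 := by simp [hsV]

theorem norm_hsV (n : ℕ) {x : EuclideanSpace ℝ (Fin n)} (hx : x ≠ 0) :
    ‖hsV n x‖ = Real.sin (min ‖x‖ π) := by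
  have hx' : (0:ℝ) < ‖x‖ := norm_pos_iff.mpr hx
  rw [hsV, norm_smul, norm_smul, Real.norm_eq_abs, Real.norm_eq_abs,
    abs_of_pos (inv_pos.mpr hx'), abs_of_nonneg (hs_sin_nonneg _ (norm_nonneg x)),
    inv_mul_cancel₀ hx'.ne', mul_one]

theorem norm_hsV_le (n : ℕ) (x : EuclideanSpace ℝ (Fin n)) : ‖hsV n x‖ ≤ ‖x‖ := by
  rcases eq_or_ne x 0 with rfl | hx
  · simp [hsV_zero]
  · rw [norm_hsV n hx]; exact hs_sin_le _ (norm_nonneg x)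

theorem hsV_lip (n : ℕ) (x y : EuclideanSpace ℝ (Fin n)) :
    ‖hsV n x - hsV n y‖ ≤ 3 * ‖x - y‖ := by
  rcases eq_or_ne x 0 with rfl | hx
  · rw [zero_sub, norm_neg, hsV_zero, zero_sub, norm_neg]
    calc ‖hsV n y‖ ≤ ‖y‖ := norm_hsV_le n y
      _ ≤ 3 * ‖y‖ := by nlinarith [norm_nonneg y]
  rcases eq_or_ne y 0 with rfl | hy
  · rw [hsV_zero, sub_zero, sub_zero]
    calc ‖hsV n x‖ ≤ ‖x‖ := norm_hsV_le n x
      _ ≤ 3 * ‖x‖ := by nlinarith [norm_nonneg x]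
  have hx' : (0:ℝ) < ‖x‖ := norm_pos_iff.mpr hx
  have hy' : (0:ℝ) < ‖y‖ := norm_pos_iff.mpr hy
  set mx := min ‖x‖ π with hmx
  set my := min ‖y‖ π with hmy
  have key : hsV n x - hsV n y
      = (Real.sin mx - Real.sin my) • (‖x‖⁻¹ • x)
        + Real.sin my • (‖x‖⁻¹ • x - ‖y‖⁻¹ • y) := by
    rw [hsV, hsV, sub_smul, smul_sub]; abel
  have hux : ‖‖x‖⁻¹ • x‖ = 1 := by
    rw [norm_smul, Real.norm_eq_abs, abs_of_pos (inv_pos.mpr hx'),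
      inv_mul_cancel₀ hx'.ne']
  calc ‖hsV n x - hsV n y‖
      ≤ ‖(Real.sin mx - Real.sin my) • (‖x‖⁻¹ • x)‖
        + ‖Real.sin my • (‖x‖⁻¹ • x - ‖y‖⁻¹ • y)‖ := by rw [key]; exact norm_add_le _ _
    _ = |Real.sin mx - Real.sin my| + Real.sin my * ‖‖x‖⁻¹ • x - ‖y‖⁻¹ • y‖ := by
        rw [norm_smul (Real.sin mx - Real.sin my), norm_smul (Real.sin my), hux, mul_one,
          Real.norm_eq_abs, Real.norm_eq_abs,
          abs_of_nonneg (hs_sin_nonneg _ (norm_nonneg y))]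
    _ ≤ ‖x - y‖ + ‖y‖ * (2 / ‖y‖ * ‖x - y‖) := by
        gcongr
        · exact (hs_sin_lip mx my).trans <| (hs_min_lip _ _).trans
            ((abs_norm_sub_norm_le x y))
        · exact hs_sin_le _ (norm_nonneg y)
        · exact hs_unit_lip hx hy
    _ = 3 * ‖x - y‖ := by field_simp; ring

noncomputable def hsE (n : ℕ) (v : Fin n → ℝ) : EuclideanSpace ℝ (Fin n) :=
  (WithLp.equiv 2 (Fin n → ℝ)).symm v

@[simp] theorem hsE_apply (n : ℕ) (v : Fin n → ℝ) (i : Fin n) : hsE n v i = v i := rfl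

@[simp] theorem hsE_eta (n : ℕ) (x : EuclideanSpace ℝ (Fin n)) :
    hsE n (fun i => x i) = x := rfl

theorem hs_norm_sq_snoc (n : ℕ) (v : Fin n → ℝ) (c : ℝ) :
    ‖hsE (n + 1) (Fin.snoc v c)‖ ^ 2 = ‖hsE n v‖ ^ 2 + c ^ 2 := by
  rw [EuclideanSpace.norm_eq, EuclideanSpace.norm_eq,
    Real.sq_sqrt (by positivity), Real.sq_sqrt (by positivity),
    Fin.sum_univ_castSucc]
  simp [Fin.snoc_castSucc, Fin.snoc_last, sq_abs]

theorem hs_snoc_sub (n : ℕ) (v w : Fin n → ℝ) (c d : ℝ) :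
    hsE (n + 1) (Fin.snoc v c) - hsE (n + 1) (Fin.snoc w d)
      = hsE (n + 1) (Fin.snoc (v - w) (c - d)) := by
  ext i
  induction i using Fin.lastCases with
  | last => simp [PiLp.sub_apply]
  | cast i => simp [PiLp.sub_apply]

noncomputable def hsF (n : ℕ) (x : EuclideanSpace ℝ (Fin n)) : EuclideanSpace ℝ (Fin (n + 1)) :=
  hsE (n + 1) (Fin.snoc (fun i => hsV n x i) (Real.cos (min ‖x‖ π)))

theorem norm_hsF (n : ℕ) (x : EuclideanSpace ℝ (Fin n)) : ‖hsF n x‖ = 1 := by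
  have h : ‖hsF n x‖ ^ 2 = 1 := by
    rw [hsF, hs_norm_sq_snoc, hsE_eta]
    rcases eq_or_ne x 0 with rfl | hx
    · simp [hsV_zero, min_eq_left Real.pi_nonneg]
    · rw [norm_hsV n hx, Real.sin_sq_add_cos_sq]
  nlinarith [norm_nonneg (hsF n x)]

theorem hsF_dist_le (n : ℕ) (x y : EuclideanSpace ℝ (Fin n)) :
    dist (hsF n x) (hsF n y) ≤ 4 * ‖x - y‖ := by
  rw [dist_eq_norm]
  have hsq : ‖hsF n x - hsF n y‖ ^ 2
      = ‖hsV n x - hsV n y‖ ^ 2 + (Real.cos (min ‖x‖ π) - Real.cos (min ‖y‖ π)) ^ 2 := by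
    rw [hsF, hsF, hs_snoc_sub, hs_norm_sq_snoc]
    have hv : hsE n ((fun i => hsV n x i) - fun i => hsV n y i) = hsV n x - hsV n y := by
      ext i
      simp [PiLp.sub_apply]
    rw [hv]
  have h1 : ‖hsV n x - hsV n y‖ ≤ 3 * ‖x - y‖ := hsV_lip n x y
  have h2 : |Real.cos (min ‖x‖ π) - Real.cos (min ‖y‖ π)| ≤ ‖x - y‖ :=
    (hs_cos_lip _ _).trans <| (hs_min_lip _ _).trans (abs_norm_sub_norm_le x y)
  nlinarith [norm_nonneg (hsF n x - hsF n y), norm_nonneg (x - y),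
    norm_nonneg (hsV n x - hsV n y),
    abs_nonneg (Real.cos (min ‖x‖ π) - Real.cos (min ‖y‖ π)),
    sq_abs (Real.cos (min ‖x‖ π) - Real.cos (min ‖y‖ π))]

theorem hsF_south (n : ℕ) {x : EuclideanSpace ℝ (Fin n)} (hx : π ≤ ‖x‖) :
    hsF n x = hsE (n + 1) (Fin.snoc (fun _ => 0) (-1)) := by
  have hm : min ‖x‖ π = π := min_eq_right hx
  rw [hsF, hm]
  have hv : (fun i => hsV n x i) = fun _ : Fin n => (0 : ℝ) := by
    funext i
    simp [hsV, hm]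
  rw [hv, Real.cos_pi]

theorem hsF_surj (n : ℕ) (hn : 1 ≤ n) (p : EuclideanSpace ℝ (Fin (n + 1)))
    (hp : ‖p‖ = 1) : ∃ y, hsF n y = p := by
  set c : ℝ := p (Fin.last n) with hc
  set w : EuclideanSpace ℝ (Fin n) := hsE n (fun i => p (Fin.castSucc i)) with hwdef
  have hp2 : p = hsE (n + 1) (Fin.snoc (fun i => p (Fin.castSucc i)) c) := by
    ext i
    induction i using Fin.lastCases with
    | last => simp [hc]
    | cast i => simp
  have hwc : ‖w‖ ^ 2 + c ^ 2 = 1 := by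
    have := hs_norm_sq_snoc n (fun i => p (Fin.castSucc i)) c
    rw [← hwdef, ← hp2, hp] at this
    rw [← this]
    norm_num
  rcases eq_or_ne w 0 with hw0 | hw0
  · -- w = 0, c = ±1
    have hc2 : c ^ 2 = 1 := by rw [hw0] at hwc; simpa using hwc
    have hpz : ∀ i : Fin n, p (Fin.castSucc i) = 0 := by
      intro i
      have := congrFun (congrArg (fun (z : EuclideanSpace ℝ (Fin n)) => (z : Fin n → ℝ)) hw0) i
      simpa [hwdef] using this
    have hcc : c = 1 ∨ c = -1 := by
      rcases mul_eq_zero.mp (show (c - 1) * (c + 1) = 0 by nlinarith) with h | h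
      · left; linarith
      · right; linarith
    rcases hcc with rfl' | rfl'
    · refine ⟨0, ?_⟩
      rw [hp2]
      unfold hsF
      congr 1
      funext i
      induction i using Fin.lastCases with
      | last => simp [min_eq_left Real.pi_nonneg, rfl']
      | cast i => simp [hsV_zero, hpz i]
    · refine ⟨π • EuclideanSpace.single (⟨0, hn⟩ : Fin n) (1 : ℝ), ?_⟩
      have hny : ‖π • EuclideanSpace.single (⟨0, hn⟩ : Fin n) (1 : ℝ)‖ = π := by
        rw [norm_smul, EuclideanSpace.norm_single, Real.norm_eq_abs,
          abs_of_nonneg Real.pi_nonneg]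
        norm_num
      rw [hsF_south n hny.ge, hp2]
      congr 1
      funext i
      induction i using Fin.lastCases with
      | last => simp [rfl']
      | cast i => simp [hpz i]
  · -- w ≠ 0
    have hw' : (0:ℝ) < ‖w‖ := norm_pos_iff.mpr hw0
    have hc2 : c ^ 2 ≤ 1 := by nlinarith [sq_nonneg ‖w‖]
    have hc3 : -1 ≤ c := by nlinarith [sq_nonneg (c - 1)]
    have hc4 : c ≤ 1 := by nlinarith [sq_nonneg (c + 1)]
    set t := Real.arccos c with htdef
    have ht0 : 0 ≤ t := Real.arccos_nonneg c
    have htπ : t ≤ π := Real.arccos_le_pi c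
    have hcost : Real.cos t = c := Real.cos_arccos hc3 hc4
    have hsint : Real.sin t = ‖w‖ := by
      rw [htdef, Real.sin_arccos]
      rw [show 1 - c ^ 2 = ‖w‖ ^ 2 by linarith]
      exact Real.sqrt_sq (norm_nonneg w)
    have htne : t ≠ 0 := by
      intro h
      rw [h, Real.sin_zero] at hsint
      exact hw'.ne hsint
    set y : EuclideanSpace ℝ (Fin n) := t • (‖w‖⁻¹ • w) with hydef
    have hny : ‖y‖ = t := by
      rw [hydef, norm_smul, norm_smul, Real.norm_eq_abs, Real.norm_eq_abs,
        abs_of_nonneg ht0, abs_of_pos (inv_pos.mpr hw'), inv_mul_cancel₀ hw'.ne',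
        mul_one]
    have hmin : min ‖y‖ π = t := by rw [hny]; exact min_eq_left htπ
    have hyne : y ≠ 0 := by
      intro h
      rw [h, norm_zero] at hny
      exact htne hny.symm
    have hyu : ‖y‖⁻¹ • y = ‖w‖⁻¹ • w := by
      rw [hny, hydef, inv_smul_smul₀ htne]
    have hVy : hsV n y = w := by
      rw [hsV, hmin, hyu, hsint, smul_smul, mul_inv_cancel₀ hw'.ne', one_smul]
    refine ⟨y, ?_⟩
    rw [hp2]
    unfold hsF
    rw [hmin, hcost, hVy]
    congr 1

/-- Euclidean space is hyperspherical: for every `n ≥ 1` and `ε > 0` there is a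
continuous surjection `f : ℝⁿ → Sⁿ` which is an `ε`-contraction and is constant
outside a compact subset of `ℝⁿ`. -/
theorem euclidean_hyperspherical (n : ℕ) (hn : 1 ≤ n) (ε : ℝ) (hε : 0 < ε) :
    ∃ f : EuclideanSpace ℝ (Fin n) →
        Metric.sphere (0 : EuclideanSpace ℝ (Fin (n + 1))) 1,
      Continuous f ∧ Function.Surjective f ∧
      (∀ x y : EuclideanSpace ℝ (Fin n), dist (f x) (f y) ≤ ε * dist x y) ∧
      ∃ (Kc : Set (EuclideanSpace ℝ (Fin n)))
        (c : Metric.sphere (0 : EuclideanSpace ℝ (Fin (n + 1))) 1),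
        IsCompact Kc ∧ ∀ x ∉ Kc, f x = c := by
  set s : ℝ := ε / 4 with hsdef
  have hs0 : 0 < s := by positivity
  have hmem : ∀ x : EuclideanSpace ℝ (Fin n),
      hsF n (s • x) ∈ Metric.sphere (0 : EuclideanSpace ℝ (Fin (n + 1))) 1 := by
    intro x
    rw [mem_sphere_zero_iff_norm]
    exact norm_hsF n (s • x)
  set f : EuclideanSpace ℝ (Fin n) →
      Metric.sphere (0 : EuclideanSpace ℝ (Fin (n + 1))) 1 :=
    fun x => ⟨hsF n (s • x), hmem x⟩ with hfdef
  have hdist : ∀ x y : EuclideanSpace ℝ (Fin n), dist (f x) (f y) ≤ ε * dist x y := by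
    intro x y
    have h1 : dist (f x) (f y) = dist (hsF n (s • x)) (hsF n (s • y)) := rfl
    rw [h1]
    calc dist (hsF n (s • x)) (hsF n (s • y)) ≤ 4 * ‖s • x - s • y‖ := hsF_dist_le n _ _
      _ = 4 * (s * ‖x - y‖) := by
          rw [← smul_sub, norm_smul, Real.norm_eq_abs, abs_of_pos hs0]
      _ = ε * dist x y := by rw [dist_eq_norm]; rw [hsdef]; ring
  refine ⟨f, ?_, ?_, hdist, ?_⟩
  · -- continuity
    have hlip : LipschitzWith ε.toNNReal f := by
      apply LipschitzWith.of_dist_le_mul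
      intro x y
      rw [Real.coe_toNNReal ε hε.le]
      exact hdist x y
    exact hlip.continuous
  · -- surjectivity
    rintro ⟨p, hp⟩
    rw [mem_sphere_zero_iff_norm] at hp
    obtain ⟨y, hy⟩ := hsF_surj n hn p hp
    refine ⟨s⁻¹ • y, ?_⟩
    apply Subtype.ext
    show hsF n (s • s⁻¹ • y) = p
    rw [smul_inv_smul₀ hs0.ne', hy]
  · -- constant outside a compact set
    refine ⟨Metric.closedBall 0 (s⁻¹ * π),
      f ((s⁻¹ * π) • EuclideanSpace.single (⟨0, hn⟩ : Fin n) (1 : ℝ)),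
      isCompact_closedBall _ _, ?_⟩
    intro x hx
    rw [Metric.mem_closedBall, dist_zero_right, not_le] at hx
    apply Subtype.ext
    have h1 : π ≤ ‖s • x‖ := by
      rw [norm_smul, Real.norm_eq_abs, abs_of_pos hs0]
      calc π = s * (s⁻¹ * π) := by field_simp
        _ ≤ s * ‖x‖ := by gcongr
    have h2 : π ≤ ‖s • ((s⁻¹ * π) • EuclideanSpace.single (⟨0, hn⟩ : Fin n) (1 : ℝ))‖ := by
      rw [norm_smul, norm_smul, EuclideanSpace.norm_single, Real.norm_eq_abs,
        Real.norm_eq_abs, abs_of_pos hs0, abs_of_pos (by positivity : (0:ℝ) < s⁻¹ * π)]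
      rw [norm_one, mul_one]
      rw [show s * (s⁻¹ * π) = π by field_simp]
    show hsF n (s • x) = hsF n _
    rw [hsF_south n h1, hsF_south n h2]
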